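/- Let G be a connected groupoid and e an object of G. The assignment sending an automorphism w of e to the functor Φ_w : Y_{G,e} → Y_{G,e} given by (a, u) ↦ (a, u ∘ w⁻¹) on objects and v ↦ v on morphisms defines a group isomorphism from Aut(e) to the group of automorphisms of the constructive functor F_{G,e} in the category of constructive functors over G (i.e., functors Φ : Y_{G,e} → Y_{G,e} with F_{G,e} ∘ Φ = F_{G,e} that are invertible). -/

import Mathlib

open CategoryTheory

universe v u

/-- The category `Y_{G,e}`: objects are pairs `(a, u : e ⟶ a)`, morphisms
`(a,u) ⟶ (a',u')` are morphisms `v : a ⟶ a'` of `G` with `u ≫ v = u'`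
(i.e. `u' = v ∘ u`). -/
structure YObj {G : Type u} [Groupoid.{v} G] (e : G) : Type (max u v) where
  pt : G
  up : e ⟶ pt

instance {G : Type u} [Groupoid.{v} G] (e : G) : Category.{v} (YObj e) where
  Hom p q := { v : p.pt ⟶ q.pt // p.up ≫ v = q.up }
  id p := ⟨𝟙 _, Category.comp_id _⟩
  comp f g := ⟨f.1 ≫ g.1, by rw [← Category.assoc, f.2, g.2]⟩
  id_comp f := Subtype.ext (Category.id_comp _)
  comp_id f := Subtype.ext (Category.comp_id _)
  assoc f g h := Subtype.ext (Category.assoc _ _ _)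

/-- The forgetful (universal covering) functor `F_{G,e} : Y_{G,e} ⥤ G`. -/
def FGe {G : Type u} [Groupoid.{v} G] (e : G) : YObj e ⥤ G where
  obj p := p.pt
  map f := f.1
  map_id _ := rfl
  map_comp _ _ := rfl
/-- The functor `Φ_w : Y_{G,e} ⥤ Y_{G,e'}` associated with `w : e ⟶ e'`, sending
`(a, u)` to `(a, u ∘ w⁻¹)` and `v` to `v`. -/
def PhiW {G : Type u} [Groupoid.{v} G] {e e' : G} (w : e ⟶ e') :
    YObj e ⥤ YObj e' where
  obj p := ⟨p.pt, Groupoid.inv w ≫ p.up⟩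
  map f := ⟨f.1, by rw [Category.assoc, f.2]⟩
  map_id _ := Subtype.ext rfl
  map_comp _ _ := Subtype.ext rfl

instance YObj.homSubsingleton {G : Type u} [Groupoid.{v} G] {e : G}
    (p q : YObj e) : Subsingleton (p ⟶ q) := by
  constructor
  intro f g
  obtain ⟨fv, hf⟩ := f
  obtain ⟨gv, hg⟩ := g
  apply Subtype.ext
  simp only
  rw [← hg] at hf
  rwa [cancel_epi] at hf

theorem YObj.ext' {G : Type u} [Groupoid.{v} G] {e : G} {p q : YObj e}
    (h : p.pt = q.pt) (h2 : p.up ≫ eqToHom h = q.up) : p = q := by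
  cases p; cases q
  cases h
  simp only [eqToHom_refl, Category.comp_id] at h2
  cases h2
  rfl

theorem YFunctor.ext' {G : Type u} [Groupoid.{v} G] {C : Type*} [Category C] {e : G}
    {Ψ Ψ' : C ⥤ YObj e} (h : ∀ X, Ψ.obj X = Ψ'.obj X) : Ψ = Ψ' :=
  CategoryTheory.Functor.ext h (fun _ _ _ => Subsingleton.elim _ _)

/-- The assignment `w ↦ Φ_w`, `(a,u) ↦ (a, u ∘ w⁻¹)`, defines a group isomorphism from
`Aut(e)` onto the group of automorphisms of `F_{G,e}` over `G`: it takes identity to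
identity and composition to composition, it is injective, and it is surjective onto the
invertible endofunctors of `Y_{G,e}` over `G`. -/
theorem stmt7 {G : Type u} [Groupoid.{v} G] [IsConnected G] (e : G) :
    (∀ w : e ⟶ e, PhiW w ⋙ FGe e = FGe e) ∧
    PhiW (𝟙 e) = 𝟭 (YObj e) ∧
    (∀ w w' : e ⟶ e, PhiW (w ≫ w') = PhiW w ⋙ PhiW w') ∧
    (Function.Injective fun w : e ⟶ e => PhiW (e := e) (e' := e) w) ∧
    (∀ Ψ : YObj e ⥤ YObj e, Ψ ⋙ FGe e = FGe e →
      (∃ Ψ' : YObj e ⥤ YObj e, Ψ' ⋙ FGe e = FGe e ∧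
        Ψ ⋙ Ψ' = 𝟭 (YObj e) ∧ Ψ' ⋙ Ψ = 𝟭 (YObj e)) →
      ∃ w : e ⟶ e, PhiW w = Ψ) := by
  refine ⟨fun w => rfl, ?_, ?_, ?_, ?_⟩
  · apply YFunctor.ext'
    intro X
    obtain ⟨a, u⟩ := X
    show YObj.mk a (Groupoid.inv (𝟙 e) ≫ u) = YObj.mk a u
    congr 1
    simp [Groupoid.inv_eq_inv]
  · intro w w'
    apply YFunctor.ext'
    intro X
    obtain ⟨a, u⟩ := X
    show YObj.mk a (Groupoid.inv (w ≫ w') ≫ u) = YObj.mk a (Groupoid.inv w' ≫ Groupoid.inv w ≫ u)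
    congr 1
    simp [Groupoid.inv_eq_inv]
  · intro w w' h
    simp only at h
    have h2 := Functor.congr_obj h ⟨e, 𝟙 e⟩
    simp only [PhiW] at h2
    have h3 : Groupoid.inv w ≫ 𝟙 e = Groupoid.inv w' ≫ 𝟙 e :=
      eq_of_heq ((YObj.mk.injEq _ _ _ _).mp h2).2
    simp only [Category.comp_id] at h3
    calc w = Groupoid.inv (Groupoid.inv w) := by simp [Groupoid.inv_eq_inv]
    _ = Groupoid.inv (Groupoid.inv w') := by rw [h3]
    _ = w' := by simp [Groupoid.inv_eq_inv]
  · intro Ψ hΨ _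
    have hpt : ∀ X : YObj e, (Ψ.obj X).pt = X.pt := fun X => Functor.congr_obj hΨ X
    have hp : (Ψ.obj ⟨e, 𝟙 e⟩).pt = e := hpt ⟨e, 𝟙 e⟩
    set w : e ⟶ e := Groupoid.inv ((Ψ.obj ⟨e, 𝟙 e⟩).up ≫ eqToHom hp) with hw
    refine ⟨w, ?_⟩
    apply YFunctor.ext'
    intro X
    let f : (⟨e, 𝟙 e⟩ : YObj e) ⟶ X := ⟨X.up, Category.id_comp _⟩
    have hmap := Functor.congr_hom hΨ f
    simp only [Functor.comp_map, FGe] at hmap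
    have h5 := (Ψ.map f).2
    have key : Ψ.obj X = (PhiW w).obj X := by
      refine YObj.ext' (q := (PhiW w).obj X) (hpt X) ?_
      show (Ψ.obj X).up ≫ eqToHom (hpt X) = Groupoid.inv w ≫ X.up
      rw [hw, Groupoid.inv_eq_inv, Groupoid.inv_eq_inv, IsIso.inv_inv]
      rw [← h5, hmap]
      simp only [Category.assoc, eqToHom_trans, eqToHom_refl, Category.comp_id]
      erw [eqToHom_trans, eqToHom_refl, Category.comp_id]
    exact key.symm
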